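/- (Lemma 4(i)) Let f,g,h,l be a permutation of 1,2,3,4 and let ρ be a pure density matrix on (ℂ^d)^{⊗4} that is separable under the bipartition fg|hl, i.e. ρ = ρ_{fg} ⊗ ρ_{hl} (up to the corresponding permutation of tensor factors) with ρ_{fg} and ρ_{hl} density matrices on (ℂ^d)^{⊗2}. Then for every k = 1,…,d²−1, ‖T_{fg|hl}‖_k ≤ 4(d²−1)/d². -/

import Mathlib

open Matrix ComplexOrder
open scoped Kronecker

/-- The singular values of a real matrix `M`: square roots of eigenvalues of `Mᴴ * M`. -/
noncomputable def singVals {α β : Type*} [Fintype α] [Fintype β] [DecidableEq β]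
    (M : Matrix α β ℝ) : β → ℝ :=
  fun i => Real.sqrt ((Matrix.isHermitian_conjTranspose_mul_self M).eigenvalues i)

/-- The Ky Fan `k`-norm of a real matrix: the sum of its `k` largest singular values
(realized as the largest sum of singular values over index sets of size at most `k`). -/
noncomputable def kyFan {α β : Type*} [Fintype α] [Fintype β] [DecidableEq β]
    (k : ℕ) (M : Matrix α β ℝ) : ℝ :=
  (Finset.univ.powerset.filter (fun s : Finset β => s.card ≤ k)).sup'
    ⟨∅, by simp⟩ (fun s => ∑ i ∈ s, singVals M i)

/-- Separability of an `n`-partite state (indexed by `Fin n → Fin d`) under the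
bipartition `A | Aᶜ`: `ρ` is, up to the permutation of tensor factors, the tensor
product of a density matrix on the factors in `A` and one on the factors not in `A`. -/
def SepUnder {n d : ℕ} (ρ : Matrix (Fin n → Fin d) (Fin n → Fin d) ℂ)
    (A : Finset (Fin n)) : Prop :=
  ∃ (ρA : Matrix ({j // j ∈ A} → Fin d) ({j // j ∈ A} → Fin d) ℂ)
    (ρB : Matrix ({j // j ∉ A} → Fin d) ({j // j ∉ A} → Fin d) ℂ),
    ρA.PosSemidef ∧ ρA.trace = 1 ∧ ρB.PosSemidef ∧ ρB.trace = 1 ∧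
    ∀ v w, ρ v w = ρA (fun j => v j.1) (fun j => w j.1) * ρB (fun j => v j.1) (fun j => w j.1)

/-- The full `n`-body correlation tensor entry `t_{a 0, …, a (n-1)}` of `ρ`,
i.e. `tr (ρ · (λ_{a 0} ⊗ ⋯ ⊗ λ_{a (n-1)}))`. -/
noncomputable def corrFull {n d : ℕ} (lam : Fin (d ^ 2 - 1) → Matrix (Fin d) (Fin d) ℂ)
    (ρ : Matrix (Fin n → Fin d) (Fin n → Fin d) ℂ) (a : Fin n → Fin (d ^ 2 - 1)) : ℝ :=
  (Matrix.trace (ρ * Matrix.of (fun v w : Fin n → Fin d => ∏ j, lam (a j) (v j) (w j)))).re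

/-- The matricization `T_{fg|hl}` of the 4-body correlation tensor: rows indexed by
`(i_f, i_g)`, columns by `(i_h, i_l)`. -/
noncomputable def T2v2 {d : ℕ} (lam : Fin (d ^ 2 - 1) → Matrix (Fin d) (Fin d) ℂ)
    (ρ : Matrix (Fin 4 → Fin d) (Fin 4 → Fin d) ℂ) (f g h l : Fin 4) :
    Matrix (Fin (d ^ 2 - 1) × Fin (d ^ 2 - 1)) (Fin (d ^ 2 - 1) × Fin (d ^ 2 - 1)) ℝ :=
  Matrix.of fun r c => corrFull lam ρ
    (fun j => if j = f then r.1 else if j = g then r.2 else if j = h then c.1 else c.2)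

lemma trace_mul_double {ι κ : Type*} [Fintype ι] [Fintype κ] (P : Matrix ι κ ℂ) (Q : Matrix κ ι ℂ) :
    (P * Q).trace = ∑ i, ∑ j, P i j * Q j i := by
  simp [Matrix.trace, Matrix.mul_apply, Matrix.diag]

lemma trace_submatrix_equiv' {ι κ : Type*} [Fintype ι] [Fintype κ] (e : ι ≃ κ)
    (M : Matrix κ κ ℂ) : (M.submatrix e e).trace = M.trace := by
  unfold Matrix.trace
  simp only [Matrix.diag_apply, Matrix.submatrix_apply]
  exact Equiv.sum_comp e (fun j => M j j)

lemma trace_mul_im_zero {ι : Type*} [Fintype ι] (σ H : Matrix ι ι ℂ)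
    (hσ : σ.IsHermitian) (hH : H.IsHermitian) : ((σ * H).trace).im = 0 := by
  have h1 : (starRingEnd ℂ) ((σ * H).trace) = (σ * H).trace := by
    have h := Matrix.trace_conjTranspose (σ * H)
    rw [Matrix.conjTranspose_mul, hσ.eq, hH.eq, Matrix.trace_mul_comm] at h
    exact h.symm
  exact Complex.conj_eq_iff_im.mp h1

lemma sum_eigs_eq_trace {ι : Type*} [Fintype ι] [DecidableEq ι] (N : Matrix ι ι ℝ)
    (hN : N.IsHermitian) : ∑ i, hN.eigenvalues i = N.trace := by
  have hspec := hN.spectral_theorem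
  have hU : (star (hN.eigenvectorUnitary : Matrix ι ι ℝ)) * (hN.eigenvectorUnitary : Matrix ι ι ℝ) = 1 :=
    (Unitary.mem_iff.mp (hN.eigenvectorUnitary).2).1
  calc ∑ i, hN.eigenvalues i
      = (Matrix.diagonal (RCLike.ofReal ∘ hN.eigenvalues) : Matrix ι ι ℝ).trace := by
        rw [Matrix.trace_diagonal]; simp
    _ = N.trace := by
        conv_rhs => rw [hspec]
        rw [Unitary.conjStarAlgAut_apply, Matrix.trace_mul_cycle, hU, Matrix.one_mul]

lemma trace_sq_re_le {ι : Type*} [Fintype ι] [DecidableEq ι] (σ : Matrix ι ι ℂ)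
    (hσ : σ.PosSemidef) : ((σ * σ).trace).re ≤ ((σ.trace).re) ^ 2 := by
  obtain ⟨B, hB⟩ : ∃ B : Matrix ι ι ℂ, σ = Bᴴ * B := by
    open scoped MatrixOrder Matrix.Norms.L2Operator in
    exact CStarAlgebra.nonneg_iff_eq_star_mul_self.mp hσ.nonneg
  have herm : σᴴ = σ := hσ.1
  have hconj : ∀ i j, σ j i = starRingEnd ℂ (σ i j) := by
    intro i j
    conv_lhs => rw [← herm]
    simp [Matrix.conjTranspose_apply]
  set u : ι → EuclideanSpace ℂ ι := fun i => WithLp.toLp 2 (fun k => B k i) with hu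
  have hinner : ∀ i j, (inner ℂ (u i) (u j) : ℂ) = σ i j := by
    intro i j
    rw [hB]
    simp [PiLp.inner_apply, RCLike.inner_apply, Matrix.mul_apply, Matrix.conjTranspose_apply, hu]
    exact Finset.sum_congr rfl fun _ _ => mul_comm _ _
  have hdiag : ∀ i, (σ i i).re = ‖u i‖ ^ 2 := by
    intro i
    rw [← hinner i i]
    exact inner_self_eq_norm_sq (𝕜 := ℂ) (u i)
  have hentry : ∀ i j, Complex.normSq (σ i j) ≤ (σ i i).re * (σ j j).re := by
    intro i j
    have h1 : ‖σ i j‖ ≤ ‖u i‖ * ‖u j‖ := by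
      rw [← hinner i j]; exact norm_inner_le_norm _ _
    have h2 : ‖σ i j‖ ^ 2 ≤ (‖u i‖ * ‖u j‖) ^ 2 := by
      apply pow_le_pow_left₀ (norm_nonneg _) h1
    rw [← Complex.sq_norm]
    calc ‖σ i j‖ ^ 2 ≤ (‖u i‖ * ‖u j‖) ^ 2 := h2
      _ = ‖u i‖ ^ 2 * ‖u j‖ ^ 2 := by ring
      _ = (σ i i).re * (σ j j).re := by rw [hdiag, hdiag]
  have htr2 : ((σ * σ).trace).re = ∑ i, ∑ j, Complex.normSq (σ i j) := by
    have : (σ * σ).trace = ∑ i, ∑ j, σ i j * σ j i := by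
      simp [Matrix.trace, Matrix.mul_apply, Matrix.diag]
    rw [this]
    rw [Complex.re_sum]
    refine Finset.sum_congr rfl fun i _ => ?_
    rw [Complex.re_sum]
    refine Finset.sum_congr rfl fun j _ => ?_
    rw [hconj i j, Complex.mul_conj]
    exact Complex.ofReal_re _
  have htrre : (σ.trace).re = ∑ i, (σ i i).re := by
    rw [Matrix.trace, Complex.re_sum]; rfl
  calc ((σ * σ).trace).re = ∑ i, ∑ j, Complex.normSq (σ i j) := htr2
    _ ≤ ∑ i, ∑ j, (σ i i).re * (σ j j).re :=
        Finset.sum_le_sum fun i _ => Finset.sum_le_sum fun j _ => hentry i j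
    _ = (∑ i, (σ i i).re) * (∑ j, (σ j j).re) := by rw [Finset.sum_mul_sum]
    _ = ((σ.trace).re) ^ 2 := by rw [htrre]; ring

lemma kyFan_outer {α β : Type*} [Fintype α] [Fintype β] [DecidableEq β]
    (X : α → ℝ) (Y : β → ℝ) (b : ℝ) (hb : 0 ≤ b)
    (hX : ∑ r, X r ^ 2 ≤ b) (hY : ∑ c, Y c ^ 2 ≤ b) (k : ℕ) :
    kyFan k (Matrix.of fun r c => X r * Y c) ≤ b := by
  set M : Matrix α β ℝ := Matrix.of fun r c => X r * Y c with hM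
  set CX := ∑ r, X r ^ 2 with hCXdef
  set CY := ∑ c, Y c ^ 2 with hCYdef
  have hCX : 0 ≤ CX := Finset.sum_nonneg fun _ _ => sq_nonneg _
  have hCY : 0 ≤ CY := Finset.sum_nonneg fun _ _ => sq_nonneg _
  set s := CX * CY with hsdef
  have hs : 0 ≤ s := mul_nonneg hCX hCY
  have hH := Matrix.isHermitian_conjTranspose_mul_self M
  have hNapp : ∀ c c', (Mᴴ * M) c c' = CX * (Y c * Y c') := by
    intro c c'
    rw [Matrix.mul_apply]
    have h1 : ∀ r, Mᴴ c r * M r c' = X r ^ 2 * (Y c * Y c') := by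
      intro r
      simp only [Matrix.conjTranspose_apply, star_trivial, hM, Matrix.of_apply]
      ring
    rw [Finset.sum_congr rfl fun r _ => h1 r, ← Finset.sum_mul, hCXdef]
  have hNN : (Mᴴ * M) * (Mᴴ * M) = s • (Mᴴ * M) := by
    ext c c''
    simp only [Matrix.mul_apply, Matrix.smul_apply, smul_eq_mul, hNapp]
    have h1 : ∀ c', (CX * (Y c * Y c')) * (CX * (Y c' * Y c'')) =
        Y c' ^ 2 * (CX * CX * (Y c * Y c'')) := fun _ => by ring
    rw [Finset.sum_congr rfl fun c' _ => h1 c', ← Finset.sum_mul, ← hCYdef, hsdef]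
    ring
  have heig : ∀ i, hH.eigenvalues i = 0 ∨ hH.eigenvalues i = s := by
    intro i
    have hvec := hH.mulVec_eigenvectorBasis i
    by_cases hμ : hH.eigenvalues i = 0
    · exact Or.inl hμ
    · refine Or.inr ?_
      have h2 : (Mᴴ * M) *ᵥ ((Mᴴ * M) *ᵥ ⇑(hH.eigenvectorBasis i)) =
          (hH.eigenvalues i * hH.eigenvalues i) • ⇑(hH.eigenvectorBasis i) := by
        rw [hvec, Matrix.mulVec_smul, hvec, smul_smul]
      have h3 : (Mᴴ * M) *ᵥ ((Mᴴ * M) *ᵥ ⇑(hH.eigenvectorBasis i)) =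
          (s * hH.eigenvalues i) • ⇑(hH.eigenvectorBasis i) := by
        rw [Matrix.mulVec_mulVec, hNN, Matrix.smul_mulVec, hvec, smul_smul]
      have hv0 : ⇑(hH.eigenvectorBasis i) ≠ 0 := by
        have := hH.eigenvectorBasis.orthonormal.ne_zero i
        intro hc
        exact this (by ext x; exact congrFun hc x)
      have h5 : hH.eigenvalues i * hH.eigenvalues i = s * hH.eigenvalues i := by
        have h4 := h2.symm.trans h3
        by_contra hne
        have := sub_eq_zero.mpr h4
        rw [← sub_smul] at this
        rcases smul_eq_zero.mp this with h | h
        · exact hne (by linarith [sub_eq_zero.mp h])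
        · exact hv0 (by ext x; exact congrFun h x)
      exact mul_left_cancel₀ hμ (by linarith [h5])
  have hnn : ∀ i, 0 ≤ hH.eigenvalues i := fun i =>
    (Matrix.posSemidef_conjTranspose_mul_self M).eigenvalues_nonneg i
  have htrN : ∑ i, hH.eigenvalues i = s := by
    rw [sum_eigs_eq_trace _ hH]
    have : (Mᴴ * M).trace = ∑ c, CX * (Y c * Y c) := by
      rw [Matrix.trace]
      exact Finset.sum_congr rfl fun c _ => hNapp c c
    rw [this]
    have h2 : ∀ c, CX * (Y c * Y c) = Y c ^ 2 * CX := fun c => by ring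
    rw [Finset.sum_congr rfl fun c _ => h2 c, ← Finset.sum_mul, ← hCYdef, hsdef]
    ring
  unfold kyFan
  apply Finset.sup'_le
  intro t _
  have hsv : ∀ i, singVals M i = Real.sqrt (hH.eigenvalues i) := fun i => rfl
  rcases eq_or_lt_of_le hs with hs0 | hs0
  · have hz : ∀ i, hH.eigenvalues i = 0 := by
      intro i
      rcases heig i with h | h
      · exact h
      · rw [h, ← hs0]
    calc ∑ i ∈ t, singVals M i = 0 := by
          refine Finset.sum_eq_zero fun i _ => ?_
          rw [hsv, hz, Real.sqrt_zero]
      _ ≤ b := hb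
  · have hsq : ∀ i, singVals M i = hH.eigenvalues i / Real.sqrt s := by
      intro i
      rcases heig i with h | h
      · rw [hsv, h, Real.sqrt_zero, zero_div]
      · rw [hsv, h, eq_div_iff (Real.sqrt_pos.mpr hs0).ne', Real.mul_self_sqrt hs]
    rw [Finset.sum_congr rfl fun i _ => hsq i, ← Finset.sum_div]
    have hsub : ∑ i ∈ t, hH.eigenvalues i ≤ s := by
      rw [← htrN]
      exact Finset.sum_le_sum_of_subset_of_nonneg (Finset.subset_univ t)
        (fun i _ _ => hnn i)
    calc (∑ i ∈ t, hH.eigenvalues i) / Real.sqrt s ≤ s / Real.sqrt s := by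
          exact div_le_div_of_nonneg_right hsub (Real.sqrt_pos.mpr hs0).le
      _ = Real.sqrt s := Real.div_sqrt
      _ ≤ Real.sqrt (b * b) := Real.sqrt_le_sqrt
          (hsdef ▸ mul_le_mul hX hY hCY hb)
      _ = b := Real.sqrt_mul_self hb

lemma kron_herm {d : ℕ} (lam : Fin (d ^ 2 - 1) → Matrix (Fin d) (Fin d) ℂ) (hherm : ∀ i, (lam i).IsHermitian) (a b : Fin (d ^ 2 - 1)) :
    (lam a ⊗ₖ lam b).IsHermitian := by
  ext ⟨i1, i2⟩ ⟨j1, j2⟩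
  simp only [Matrix.conjTranspose_apply, Matrix.kroneckerMap_apply, star_mul']
  have e1 : star (lam a j1 i1) = lam a i1 j1 := by
    conv_rhs => rw [← (hherm a).eq]
    simp [Matrix.conjTranspose_apply]
  have e2 : star (lam b j2 i2) = lam b i2 j2 := by
    conv_rhs => rw [← (hherm b).eq]
    simp [Matrix.conjTranspose_apply]
  rw [e1, e2]

lemma bessel_bound {d : ℕ} (lam : Fin (d ^ 2 - 1) → Matrix (Fin d) (Fin d) ℂ) (hd : 2 ≤ d)
    (hherm : ∀ i, (lam i).IsHermitian)
    (htr : ∀ i, (lam i).trace = 0)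
    (horth : ∀ i j, (lam i * lam j).trace = if i = j then 2 else 0)
    (σ : Matrix (Fin d × Fin d) (Fin d × Fin d) ℂ)
    (hσ : σ.PosSemidef) (h1 : σ.trace = 1) :
    ∑ p : Fin (d ^ 2 - 1) × Fin (d ^ 2 - 1), (((σ * (lam p.1 ⊗ₖ lam p.2)).trace).re) ^ 2
      ≤ 4 * ((d : ℝ) ^ 2 - 1) / (d : ℝ) ^ 2 := by
  have hd0 : (d : ℂ) ≠ 0 := Nat.cast_ne_zero.mpr (by omega)
  have hd0' : (0:ℝ) < (d : ℝ) := by exact_mod_cast (by omega : 0 < d)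
  classical
  set G : Fin (d ^ 2 - 1) × Fin (d ^ 2 - 1) → Matrix (Fin d × Fin d) (Fin d × Fin d) ℂ :=
    fun p => lam p.1 ⊗ₖ lam p.2 with hG
  have hGG : ∀ p q, ((G p) * (G q)).trace = if p = q then 4 else 0 := by
    intro p q
    rw [hG]
    simp only
    rw [← Matrix.mul_kronecker_mul, Matrix.trace_kronecker, horth, horth]
    by_cases e1 : p.1 = q.1 <;> by_cases e2 : p.2 = q.2 <;>
      simp [Prod.ext_iff, e1, e2] <;> norm_num
  have hGherm : ∀ p, (G p)ᴴ = G p := fun p => (kron_herm lam hherm p.1 p.2).eq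
  have htrG : ∀ p, (G p).trace = 0 := by
    intro p; rw [hG]; simp only; rw [Matrix.trace_kronecker, htr, zero_mul]
  let toE : Matrix (Fin d × Fin d) (Fin d × Fin d) ℂ →
      EuclideanSpace ℂ ((Fin d × Fin d) × (Fin d × Fin d)) := fun A => WithLp.toLp 2 (fun q => A q.1 q.2)
  have hinner : ∀ A B, (inner ℂ (toE A) (toE B) : ℂ) = (Aᴴ * B).trace := by
    intro A B
    have lhs : (inner ℂ (toE A) (toE B) : ℂ) =
        ∑ q : (Fin d × Fin d) × (Fin d × Fin d), (starRingEnd ℂ) (A q.1 q.2) * B q.1 q.2 := by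
      simp [PiLp.inner_apply, RCLike.inner_apply, toE]
      exact Finset.sum_congr rfl fun _ _ => mul_comm _ _
    rw [lhs, Fintype.sum_prod_type, Matrix.trace, Finset.sum_comm]
    refine Finset.sum_congr rfl fun j _ => ?_
    simp [Matrix.mul_apply, Matrix.conjTranspose_apply, Matrix.diag]
  have hsmul' : ∀ (c : ℂ) (A B : Matrix (Fin d × Fin d) (Fin d × Fin d) ℂ),
      ((c • A)ᴴ * B).trace = (starRingEnd ℂ) c * (Aᴴ * B).trace := by
    intro c A B
    rw [Matrix.conjTranspose_smul, Matrix.smul_mul, Matrix.trace_smul]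
    simp [smul_eq_mul]
  set v : (Unit ⊕ (Fin (d ^ 2 - 1) × Fin (d ^ 2 - 1))) →
      EuclideanSpace ℂ ((Fin d × Fin d) × (Fin d × Fin d)) :=
    Sum.elim (fun _ => toE (((d : ℂ))⁻¹ • 1)) (fun p => toE ((2 : ℂ)⁻¹ • G p)) with hv
  have horm : Orthonormal ℂ v := by
    rw [orthonormal_iff_ite]
    rintro (⟨⟩ | p) (⟨⟩ | q)
    · rw [hv]
      simp only [Sum.elim_inl]
      rw [hinner, hsmul', Matrix.conjTranspose_one, Matrix.one_mul, Matrix.trace_smul,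
        Matrix.trace_one]
      simp only [map_inv₀, map_natCast, smul_eq_mul, if_pos]
      field_simp
      simp [sq]
    · rw [hv]
      simp only [Sum.elim_inl, Sum.elim_inr]
      rw [hinner, hsmul', Matrix.conjTranspose_one, Matrix.one_mul, Matrix.trace_smul, htrG]
      simp
    · rw [hv]
      simp only [Sum.elim_inl, Sum.elim_inr]
      rw [hinner, hsmul', hGherm, Matrix.mul_smul, Matrix.mul_one, Matrix.trace_smul, htrG]
      simp
    · rw [hv]
      simp only [Sum.elim_inr]
      rw [hinner, hsmul', hGherm, Matrix.mul_smul, Matrix.trace_smul, hGG]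
      simp only [map_inv₀, map_ofNat, smul_eq_mul, Sum.inr.injEq]
      by_cases hpq : p = q <;> simp [hpq] <;> norm_num
  have hbessel := horm.sum_inner_products_le (x := toE σ) (s := (Finset.univ : Finset _))
  rw [Fintype.sum_sum_type] at hbessel
  have hrhs : ‖toE σ‖ ^ 2 ≤ 1 := by
    have e1 : ((inner ℂ (toE σ) (toE σ) : ℂ)).re = ‖toE σ‖ ^ 2 :=
      inner_self_eq_norm_sq (𝕜 := ℂ) (toE σ)
    rw [← e1, hinner, hσ.1.eq]
    have := trace_sq_re_le σ hσ
    rw [h1] at this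
    simpa using this
  have h0 : ∀ u : Unit, ‖(inner ℂ (v (Sum.inl u)) (toE σ) : ℂ)‖ ^ 2 = ((d : ℝ)⁻¹) ^ 2 := by
    intro u
    rw [hv]
    simp only [Sum.elim_inl]
    rw [hinner, hsmul', Matrix.conjTranspose_one, Matrix.one_mul, h1, mul_one, map_inv₀,
      map_natCast, norm_inv, Complex.norm_natCast]
  have hp : ∀ p, (((σ * G p).trace).re) ^ 2 / 4 ≤ ‖(inner ℂ (v (Sum.inr p)) (toE σ) : ℂ)‖ ^ 2 := by
    intro p
    rw [hv]
    simp only [Sum.elim_inr]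
    rw [hinner, hsmul', hGherm]
    rw [map_inv₀, map_ofNat, norm_mul, mul_pow, norm_inv]
    have hn2 : ‖(2 : ℂ)‖ = 2 := by norm_num
    rw [hn2]
    have hcomm : (G p * σ).trace = (σ * G p).trace := Matrix.trace_mul_comm (G p) σ
    rw [hcomm]
    have hz : (((σ * G p).trace).re) ^ 2 ≤ ‖(σ * G p).trace‖ ^ 2 := by
      rw [Complex.sq_norm, Complex.normSq_apply]
      nlinarith [sq_nonneg ((σ * G p).trace).im]
    nlinarith [hz]
  have hfin : ((d : ℝ)⁻¹) ^ 2 + ∑ p, (((σ * G p).trace).re) ^ 2 / 4 ≤ 1 := by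
    have hl : ((d : ℝ)⁻¹) ^ 2 + ∑ p, (((σ * G p).trace).re) ^ 2 / 4 ≤
        (∑ u : Unit, ‖(inner ℂ (v (Sum.inl u)) (toE σ) : ℂ)‖ ^ 2) +
        ∑ p, ‖(inner ℂ (v (Sum.inr p)) (toE σ) : ℂ)‖ ^ 2 := by
      gcongr
      · exact le_of_eq (by simpa using (h0 ()).symm)
      · exact hp _
    exact hl.trans (hbessel.trans hrhs)
  have harr : ∑ p : Fin (d ^ 2 - 1) × Fin (d ^ 2 - 1), (((σ * G p).trace).re) ^ 2 ≤
      4 * (1 - ((d : ℝ)⁻¹) ^ 2) := by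
    have hs4 : ∑ p : Fin (d ^ 2 - 1) × Fin (d ^ 2 - 1), (((σ * G p).trace).re) ^ 2 =
        4 * ∑ p : Fin (d ^ 2 - 1) × Fin (d ^ 2 - 1), (((σ * G p).trace).re) ^ 2 / 4 := by
      rw [Finset.mul_sum]
      exact Finset.sum_congr rfl fun p _ => by ring
    rw [hs4]
    linarith [hfin]
  have : 4 * (1 - ((d : ℝ)⁻¹) ^ 2) = 4 * ((d : ℝ) ^ 2 - 1) / (d : ℝ) ^ 2 := by
    field_simp
  rw [← this]
  exact harr

lemma my_prod_split {α M : Type*} [Fintype α] [CommMonoid M] (p : α → Prop) [DecidablePred p]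
    {F1 : Fintype {x // p x}} {F2 : Fintype {x // ¬ p x}} (f : α → M) :
    (∏ i : {x // p x}, f i.1) * (∏ i : {x // ¬ p x}, f i.1) = ∏ i, f i := by
  have h1 : F1 = Subtype.fintype _ := Subsingleton.elim _ _
  have h2 : F2 = Subtype.fintype _ := Subsingleton.elim _ _
  subst h1; subst h2
  exact Fintype.prod_subtype_mul_prod_subtype p f

lemma trace_factor {n d : ℕ} (A : Finset (Fin n))
    (ρ : Matrix (Fin n → Fin d) (Fin n → Fin d) ℂ)
    (ρA : Matrix ({j // j ∈ A} → Fin d) ({j // j ∈ A} → Fin d) ℂ)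
    (ρB : Matrix ({j // j ∉ A} → Fin d) ({j // j ∉ A} → Fin d) ℂ)
    (hfact : ∀ v w, ρ v w =
      ρA (fun j => v j.1) (fun j => w j.1) * ρB (fun j => v j.1) (fun j => w j.1))
    (F : Fin n → Matrix (Fin d) (Fin d) ℂ) :
    (ρ * Matrix.of fun v w : Fin n → Fin d => ∏ j, F j (v j) (w j)).trace
      = (ρA * Matrix.of fun v w : {j // j ∈ A} → Fin d => ∏ j, F j.1 (v j) (w j)).trace *
        (ρB * Matrix.of fun v w : {j // j ∉ A} → Fin d => ∏ j, F j.1 (v j) (w j)).trace := by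
  classical
  rw [trace_mul_double, trace_mul_double, trace_mul_double]
  set g : ({j // j ∈ A} → Fin d) → ({j // j ∈ A} → Fin d) → ℂ :=
    fun x x' => ρA x x' * ∏ j, F j.1 (x' j) (x j) with hg
  set h : ({j // j ∉ A} → Fin d) → ({j // j ∉ A} → Fin d) → ℂ :=
    fun y y' => ρB y y' * ∏ j, F j.1 (y' j) (y j) with hh
  set e := (Equiv.piEquivPiSubtypeProd (fun j : Fin n => j ∈ A) (fun _ => Fin d)).symm with he
  have hEA : ∀ pr : ({j // j ∈ A} → Fin d) × ({j // j ∉ A} → Fin d),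
      (fun j : {j // j ∈ A} => e pr j.1) = pr.1 := by
    intro pr; funext j
    simp [he, Equiv.piEquivPiSubtypeProd, j.2]
  have hEB : ∀ pr : ({j // j ∈ A} → Fin d) × ({j // j ∉ A} → Fin d),
      (fun j : {j // j ∉ A} => e pr j.1) = pr.2 := by
    intro pr; funext j
    simp [he, Equiv.piEquivPiSubtypeProd, j.2]
  have step1 : ∀ v w : Fin n → Fin d,
      ρ v w * (Matrix.of fun v w : Fin n → Fin d => ∏ j, F j (v j) (w j)) w v =
      g (fun j => v j.1) (fun j => w j.1) * h (fun j => v j.1) (fun j => w j.1) := by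
    intro v w
    rw [Matrix.of_apply, hfact,
      ← my_prod_split (fun j => j ∈ A) (fun j => F j (w j) (v j))]
    show (ρA (fun j => v j.1) (fun j => w j.1) * ρB (fun j => v j.1) (fun j => w j.1)) *
        ((∏ j : {j // j ∈ A}, F j.1 (w j.1) (v j.1)) *
          ∏ j : {j // j ∉ A}, F j.1 (w j.1) (v j.1)) =
      (ρA (fun j => v j.1) (fun j => w j.1) * ∏ j : {j // j ∈ A}, F j.1 (w j.1) (v j.1)) *
      (ρB (fun j => v j.1) (fun j => w j.1) * ∏ j : {j // j ∉ A}, F j.1 (w j.1) (v j.1))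
    exact mul_mul_mul_comm _ _ _ _
  calc ∑ v : Fin n → Fin d, ∑ w : Fin n → Fin d,
        ρ v w * (Matrix.of fun v w : Fin n → Fin d => ∏ j, F j (v j) (w j)) w v
      = ∑ v : Fin n → Fin d, ∑ w : Fin n → Fin d,
          g (fun j => v j.1) (fun j => w j.1) * h (fun j => v j.1) (fun j => w j.1) := by
        exact Finset.sum_congr rfl fun v _ => Finset.sum_congr rfl fun w _ => step1 v w
    _ = ∑ pr : ({j // j ∈ A} → Fin d) × ({j // j ∉ A} → Fin d),
        ∑ pr' : ({j // j ∈ A} → Fin d) × ({j // j ∉ A} → Fin d),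
          g pr.1 pr'.1 * h pr.2 pr'.2 := by
        refine (Fintype.sum_equiv e _ _ fun pr => ?_).symm
        refine Fintype.sum_equiv e _ _ fun pr' => ?_
        rw [hEA pr, hEB pr, hEA pr', hEB pr']
    _ = (∑ x, ∑ x', g x x') * (∑ y, ∑ y', h y y') := by
        rw [Fintype.sum_prod_type]
        have inner : ∀ x y, (∑ pr' : ({j // j ∈ A} → Fin d) × ({j // j ∉ A} → Fin d),
            g x pr'.1 * h y pr'.2) = (∑ x', g x x') * (∑ y', h y y') := by
          intro x y
          rw [Fintype.sum_prod_type]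
          exact (Finset.sum_mul_sum _ _ _ _).symm
        rw [Finset.sum_congr rfl fun x _ => Finset.sum_congr rfl fun y _ => inner x y]
        exact (Finset.sum_mul_sum _ _ _ _).symm
    _ = (∑ x, ∑ x', ρA x x' *
          (Matrix.of fun v w : {j // j ∈ A} → Fin d => ∏ j, F j.1 (v j) (w j)) x' x) *
        (∑ y, ∑ y', ρB y y' *
          (Matrix.of fun v w : {j // j ∉ A} → Fin d => ∏ j, F j.1 (v j) (w j)) y' y) := rfl

def pairEquiv {S : Type*} [DecidableEq S] (jf jg : S) (hne : jf ≠ jg)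
    (hall : ∀ j : S, j = jf ∨ j = jg) (d : ℕ) : (S → Fin d) ≃ Fin d × Fin d where
  toFun v := (v jf, v jg)
  invFun p j := if j = jf then p.1 else p.2
  left_inv v := by
    funext j
    rcases hall j with rfl | rfl
    · simp
    · simp [Ne.symm hne]
  right_inv p := by
    simp [Prod.ext_iff, Ne.symm hne]

lemma subMatrix_eq_kron {S : Type*} [DecidableEq S] [Fintype S] (jf jg : S) (hne : jf ≠ jg)
    (hall : ∀ j : S, j = jf ∨ j = jg) {d m : ℕ} (lam : Fin m → Matrix (Fin d) (Fin d) ℂ)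
    (a : S → Fin m) :
    (Matrix.of fun v w : S → Fin d => ∏ j, lam (a j) (v j) (w j)) =
      ((lam (a jf)) ⊗ₖ (lam (a jg))).submatrix (pairEquiv jf jg hne hall d)
        (pairEquiv jf jg hne hall d) := by
  have huniv : (Finset.univ : Finset S) = {jf, jg} := by
    ext j; simpa using hall j
  ext v w
  rw [Matrix.of_apply, show (∏ j, lam (a j) (v j) (w j)) =
    ∏ j ∈ ({jf, jg} : Finset S), lam (a j) (v j) (w j) from by rw [← huniv],
    Finset.prod_pair hne]
  simp [Matrix.submatrix_apply, pairEquiv, Matrix.kroneckerMap_apply]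

lemma trace_transport {S : Type*} [Fintype S] [DecidableEq S] {d : ℕ}
    (e : (S → Fin d) ≃ Fin d × Fin d) (P : Matrix (S → Fin d) (S → Fin d) ℂ)
    (K : Matrix (Fin d × Fin d) (Fin d × Fin d) ℂ) :
    (P * K.submatrix e e).trace = ((P.submatrix e.symm e.symm) * K).trace := by
  have hP : P = (P.submatrix (e.symm : _ ≃ _) (e.symm : _ ≃ _)).submatrix e e := by
    rw [Matrix.submatrix_submatrix]
    simp
  conv_lhs => rw [hP]
  rw [Matrix.submatrix_mul_equiv]
  exact trace_submatrix_equiv' e _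

lemma card_three (a b c : Fin 4) : ({a, b, c} : Finset (Fin 4)).card ≤ 3 :=
  calc ({a, b, c} : Finset (Fin 4)).card ≤ ({b, c} : Finset (Fin 4)).card + 1 :=
        Finset.card_insert_le _ _
    _ ≤ (({c} : Finset (Fin 4)).card + 1) + 1 :=
        Nat.add_le_add_right (Finset.card_insert_le _ _) 1
    _ = 3 := by simp

/-- (Lemma 4(i)) If a pure four-partite state is separable under the bipartition `fg|hl`,
then `‖T_{fg|hl}‖_k ≤ 4(d²-1)/d²` for every `k = 1, …, d²-1`. -/
theorem kyFan_T2v2_of_sep (d : ℕ) (hd : 2 ≤ d)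
    (lam : Fin (d ^ 2 - 1) → Matrix (Fin d) (Fin d) ℂ)
    (hherm : ∀ i, (lam i).IsHermitian)
    (htr : ∀ i, (lam i).trace = 0)
    (horth : ∀ i j, (lam i * lam j).trace = if i = j then 2 else 0)
    (f g h l : Fin 4) (hperm : ({f, g, h, l} : Finset (Fin 4)) = Finset.univ)
    (ρ : Matrix (Fin 4 → Fin d) (Fin 4 → Fin d) ℂ)
    (hpsd : ρ.PosSemidef) (htrρ : ρ.trace = 1) (hpure : ρ * ρ = ρ)
    (hsep : SepUnder ρ {f, g})
    (k : ℕ) (hk1 : 1 ≤ k) (hk2 : k ≤ d ^ 2 - 1) :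
    kyFan k (T2v2 lam ρ f g h l) ≤ 4 * ((d : ℝ) ^ 2 - 1) / (d : ℝ) ^ 2 := by
  classical
  -- pairwise distinctness
  have hcard : ({f, g, h, l} : Finset (Fin 4)).card = 4 := by
    rw [hperm]; simp
  have hfg : f ≠ g := by
    rintro rfl
    rw [Finset.insert_idem] at hcard
    have := card_three f h l; omega
  have hfh : f ≠ h := by
    rintro rfl
    rw [Finset.insert_comm f g, Finset.insert_idem] at hcard
    have := card_three g f l; omega
  have hfl : f ≠ l := by
    rintro rfl
    rw [Finset.insert_comm f g, Finset.insert_comm f h,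
      Finset.insert_eq_self.mpr (Finset.mem_singleton_self f)] at hcard
    have := card_three g h f; omega
  have hgh : g ≠ h := by
    rintro rfl
    rw [Finset.insert_idem] at hcard
    have := card_three f g l; omega
  have hgl : g ≠ l := by
    rintro rfl
    rw [Finset.insert_comm g h,
      Finset.insert_eq_self.mpr (Finset.mem_singleton_self g)] at hcard
    have := card_three f h g; omega
  have hhl : h ≠ l := by
    rintro rfl
    rw [Finset.insert_eq_self.mpr (Finset.mem_singleton_self h)] at hcard
    have := card_three f g h; omega
  obtain ⟨ρA, ρB, hApsd, hAtr, hBpsd, hBtr, hfact⟩ := hsep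
  -- the two-element subtypes
  have hfmem : f ∈ ({f, g} : Finset (Fin 4)) := by simp
  have hgmem : g ∈ ({f, g} : Finset (Fin 4)) := by simp
  have hhmem : h ∉ ({f, g} : Finset (Fin 4)) := by simp [Ne.symm hfh, Ne.symm hgh]
  have hlmem : l ∉ ({f, g} : Finset (Fin 4)) := by simp [Ne.symm hfl, Ne.symm hgl]
  set jf : {j // j ∈ ({f, g} : Finset (Fin 4))} := ⟨f, hfmem⟩ with hjf
  set jg : {j // j ∈ ({f, g} : Finset (Fin 4))} := ⟨g, hgmem⟩ with hjg
  set jh : {j // j ∉ ({f, g} : Finset (Fin 4))} := ⟨h, hhmem⟩ with hjh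
  set jl : {j // j ∉ ({f, g} : Finset (Fin 4))} := ⟨l, hlmem⟩ with hjl
  have hne1 : jf ≠ jg := fun hEq => hfg (congrArg Subtype.val hEq)
  have hne2 : jh ≠ jl := fun hEq => hhl (congrArg Subtype.val hEq)
  have hall1 : ∀ j : {j // j ∈ ({f, g} : Finset (Fin 4))}, j = jf ∨ j = jg := by
    rintro ⟨j, hj⟩
    simp only [Finset.mem_insert, Finset.mem_singleton] at hj
    rcases hj with rfl | rfl
    · exact Or.inl rfl
    · exact Or.inr rfl
  have hall2 : ∀ j : {j // j ∉ ({f, g} : Finset (Fin 4))}, j = jh ∨ j = jl := by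
    rintro ⟨j, hj⟩
    have hj4 : j ∈ ({f, g, h, l} : Finset (Fin 4)) := by rw [hperm]; exact Finset.mem_univ j
    simp only [Finset.mem_insert, Finset.mem_singleton] at hj4 hj
    push_neg at hj
    rcases hj4 with rfl | rfl | rfl | rfl
    · exact absurd rfl hj.1
    · exact absurd rfl hj.2
    · exact Or.inl rfl
    · exact Or.inr rfl
  set e1 := pairEquiv jf jg hne1 hall1 d with he1
  set e2 := pairEquiv jh jl hne2 hall2 d with he2
  set σ₁ := ρA.submatrix (e1.symm : _ ≃ _) (e1.symm : _ ≃ _) with hσ₁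
  set σ₂ := ρB.submatrix (e2.symm : _ ≃ _) (e2.symm : _ ≃ _) with hσ₂
  have hσ₁psd : σ₁.PosSemidef := (Matrix.posSemidef_submatrix_equiv e1.symm).mpr hApsd
  have hσ₂psd : σ₂.PosSemidef := (Matrix.posSemidef_submatrix_equiv e2.symm).mpr hBpsd
  have hσ₁tr : σ₁.trace = 1 := by rw [hσ₁, trace_submatrix_equiv' e1.symm, hAtr]
  have hσ₂tr : σ₂.trace = 1 := by rw [hσ₂, trace_submatrix_equiv' e2.symm, hBtr]
  set X : Fin (d ^ 2 - 1) × Fin (d ^ 2 - 1) → ℝ :=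
    fun r => ((σ₁ * (lam r.1 ⊗ₖ lam r.2)).trace).re with hX
  set Y : Fin (d ^ 2 - 1) × Fin (d ^ 2 - 1) → ℝ :=
    fun c => ((σ₂ * (lam c.1 ⊗ₖ lam c.2)).trace).re with hY
  have hT : T2v2 lam ρ f g h l = Matrix.of fun r c => X r * Y c := by
    ext r c
    show corrFull lam ρ
      (fun j => if j = f then r.1 else if j = g then r.2 else if j = h then c.1 else c.2)
      = X r * Y c
    set a : Fin 4 → Fin (d ^ 2 - 1) :=
      fun j => if j = f then r.1 else if j = g then r.2 else if j = h then c.1 else c.2 with ha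
    unfold corrFull
    rw [trace_factor ({f, g} : Finset (Fin 4)) ρ ρA ρB hfact (fun j => lam (a j))]
    have hMA : (Matrix.of fun v w : {j // j ∈ ({f, g} : Finset (Fin 4))} → Fin d =>
        ∏ j, lam (a j.1) (v j) (w j)) = ((lam r.1) ⊗ₖ (lam r.2)).submatrix e1 e1 := by
      rw [he1, subMatrix_eq_kron jf jg hne1 hall1 lam (fun j => a j.1)]
      have h1 : a jf.1 = r.1 := by rw [hjf]; simp [ha]
      have h2 : a jg.1 = r.2 := by rw [hjg]; simp [ha, Ne.symm hfg]
      rw [h1, h2]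
    have hMB : (Matrix.of fun v w : {j // j ∉ ({f, g} : Finset (Fin 4))} → Fin d =>
        ∏ j, lam (a j.1) (v j) (w j)) = ((lam c.1) ⊗ₖ (lam c.2)).submatrix e2 e2 := by
      rw [he2, subMatrix_eq_kron jh jl hne2 hall2 lam (fun j => a j.1)]
      have h1 : a jh.1 = c.1 := by rw [hjh]; simp [ha, Ne.symm hfh, Ne.symm hgh]
      have h2 : a jl.1 = c.2 := by rw [hjl]; simp [ha, Ne.symm hfl, Ne.symm hgl, Ne.symm hhl]
      rw [h1, h2]
    rw [hMA, hMB, trace_transport e1 ρA _, trace_transport e2 ρB _, ← hσ₁, ← hσ₂]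
    have him1 : ((σ₁ * (lam r.1 ⊗ₖ lam r.2)).trace).im = 0 :=
      trace_mul_im_zero _ _ hσ₁psd.1 (kron_herm lam hherm r.1 r.2)
    have him2 : ((σ₂ * (lam c.1 ⊗ₖ lam c.2)).trace).im = 0 :=
      trace_mul_im_zero _ _ hσ₂psd.1 (kron_herm lam hherm c.1 c.2)
    rw [Complex.mul_re, him1, him2]
    simp [hX, hY]
  have hb : (0:ℝ) ≤ 4 * ((d : ℝ) ^ 2 - 1) / (d : ℝ) ^ 2 := by
    have hd2 : (2:ℝ) ≤ (d : ℝ) := by exact_mod_cast hd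
    apply div_nonneg _ (by positivity)
    nlinarith
  rw [hT]
  exact kyFan_outer X Y _ hb
    (bessel_bound lam hd hherm htr horth σ₁ hσ₁psd hσ₁tr)
    (bessel_bound lam hd hherm htr horth σ₂ hσ₂psd hσ₂tr) k
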